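/- arXiv:2402.14671 — 2 statements merged into one kernel-verified Lean document; each statement's English description precedes it below -/
import Mathlib

section
/- Let T : Hol(𝔻) → Hol(𝔻) be a continuous linear operator isometric for two seminorms ‖·‖_{∞,r₁} and ‖·‖_{∞,r₂} with 0 < r₁ < r₂ < 1. Then T maps constant functions to constant functions of the same modulus: T𝟙 is a unimodular constant function. -/
open Metric Complex Set

/-- The sup seminorm `‖f‖_{∞,r} = sup_{|z| ≤ r} |f(z)|`. -/
noncomputable def supNorm (r : ℝ) (f : ℂ → ℂ) : ℝ :=
  ⨆ z : Metric.closedBall (0:ℂ) r, ‖f (z : ℂ)‖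

/-- `Hol(𝔻)`: the space of holomorphic functions on the open unit disc,
as a submodule of `ℂ → ℂ`. -/
noncomputable def HolD : Submodule ℂ (ℂ → ℂ) where
  carrier := {f | DifferentiableOn ℂ f (Metric.ball 0 1)}
  add_mem' := fun hf hg => hf.add hg
  zero_mem' := differentiableOn_const 0
  smul_mem' := fun c _ hf => hf.const_smul c

lemma supNorm_attained {r : ℝ} (hr : 0 ≤ r) {g : ℂ → ℂ}
    (hg : ContinuousOn g (Metric.closedBall 0 r)) :
    ∃ z₀ ∈ Metric.closedBall (0:ℂ) r, supNorm r g = ‖g z₀‖ ∧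
      ∀ z ∈ Metric.closedBall (0:ℂ) r, ‖g z‖ ≤ ‖g z₀‖ := by
  have hne : (Metric.closedBall (0:ℂ) r).Nonempty := ⟨0, by simpa using hr⟩
  have : Nonempty (Metric.closedBall (0:ℂ) r) := hne.to_subtype
  obtain ⟨z₀, hz₀, hmax⟩ := (isCompact_closedBall (0:ℂ) r).exists_isMaxOn hne
    (continuous_norm.comp_continuousOn hg)
  refine ⟨z₀, hz₀, ?_, fun z hz => hmax hz⟩
  apply le_antisymm
  · exact ciSup_le fun z => hmax z.2
  · have hbdd : BddAbove (Set.range fun z : Metric.closedBall (0:ℂ) r =>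
        ‖g (z : ℂ)‖) := ⟨‖g z₀‖, by
      rintro x ⟨z, rfl⟩; exact hmax z.2⟩
    exact le_ciSup hbdd ⟨z₀, hz₀⟩

lemma supNorm_one {r : ℝ} (hr : 0 ≤ r) :
    supNorm r (fun _ : ℂ => (1:ℂ)) = 1 := by
  have : Nonempty (Metric.closedBall (0:ℂ) r) := ⟨⟨0, by simpa using hr⟩⟩
  simp [supNorm]

/-- Step 1: a continuous linear operator on `Hol(𝔻)` isometric
for two seminorms `‖·‖_{∞,r₁}` and `‖·‖_{∞,r₂}` sends the constant function
`𝟙` to a unimodular constant function. -/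
theorem image_of_one_is_unimodular_constant
    (r₁ r₂ : ℝ) (hr₁ : 0 < r₁) (hr₁₂ : r₁ < r₂) (hr₂ : r₂ < 1)
    (T : HolD →ₗ[ℂ] HolD)
    (hcont : ∀ r : ℝ, 0 < r → r < 1 → ∃ C s : ℝ, 0 < s ∧ s < 1 ∧ 0 ≤ C ∧
      ∀ f : HolD, supNorm r (T f).1 ≤ C * supNorm s f.1)
    (hiso₁ : ∀ f : HolD, supNorm r₁ (T f).1 = supNorm r₁ f.1)
    (hiso₂ : ∀ f : HolD, supNorm r₂ (T f).1 = supNorm r₂ f.1) :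
    ∃ α : ℂ, ‖α‖ = 1 ∧
      ∀ z ∈ Metric.ball (0:ℂ) 1,
        (T ⟨fun _ => 1, differentiableOn_const 1⟩).1 z = α := by
  set g : ℂ → ℂ := (T ⟨fun _ => 1, differentiableOn_const 1⟩).1 with hgdef
  have hg : DifferentiableOn ℂ g (Metric.ball 0 1) :=
    (T ⟨fun _ => 1, differentiableOn_const 1⟩).2
  have h1 : supNorm r₁ g = 1 := by
    rw [hgdef, hiso₁]; exact supNorm_one hr₁.le
  have h2 : supNorm r₂ g = 1 := by
    rw [hgdef, hiso₂]; exact supNorm_one (hr₁.trans hr₁₂).le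
  have hsub : Metric.closedBall (0:ℂ) r₂ ⊆ Metric.ball 0 1 :=
    closedBall_subset_ball hr₂
  have hgc₂ : ContinuousOn g (Metric.closedBall 0 r₂) :=
    hg.continuousOn.mono hsub
  have hgc₁ : ContinuousOn g (Metric.closedBall 0 r₁) :=
    hgc₂.mono (closedBall_subset_closedBall hr₁₂.le)
  obtain ⟨z₀, hz₀, hval₁, _⟩ := supNorm_attained hr₁.le hgc₁
  obtain ⟨w, hw, hval₂, hmax₂⟩ := supNorm_attained (hr₁.trans hr₁₂).le hgc₂
  have habs : ‖g z₀‖ = 1 := by rw [← hval₁, h1]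
  have hle : ∀ z ∈ Metric.closedBall (0:ℂ) r₂, ‖g z‖ ≤ 1 := by
    intro z hz
    calc ‖g z‖ ≤ ‖g w‖ := hmax₂ z hz
    _ = 1 := by rw [← hval₂, h2]
  have hz₀' : z₀ ∈ Metric.ball (0:ℂ) r₂ := by
    rw [mem_closedBall] at hz₀
    exact mem_ball.2 (lt_of_le_of_lt hz₀ hr₁₂)
  have hmaxOn : IsMaxOn (norm ∘ g) (Metric.ball (0:ℂ) r₂) z₀ := by
    intro z hz
    have := hle z (ball_subset_closedBall hz)
    simp only [Function.comp, Set.mem_setOf_eq]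
    rw [habs]; exact this
  have heq : Set.EqOn g (Function.const ℂ (g z₀)) (Metric.ball (0:ℂ) r₂) :=
    Complex.eqOn_of_isPreconnected_of_isMaxOn_norm
      (convex_ball _ _).isPreconnected isOpen_ball
      (hg.mono (ball_subset_ball hr₂.le)) hz₀' hmaxOn
  -- extend to the whole unit disc by analytic continuation
  have hga : AnalyticOnNhd ℂ g (Metric.ball 0 1) := hg.analyticOnNhd isOpen_ball
  have hca : AnalyticOnNhd ℂ (Function.const ℂ (g z₀)) (Metric.ball (0:ℂ) 1) :=
    fun _ _ => analyticAt_const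
  have h0 : (0:ℂ) ∈ Metric.ball (0:ℂ) 1 := by simp
  have hev : g =ᶠ[nhds (0:ℂ)] Function.const ℂ (g z₀) :=
    Filter.eventuallyEq_of_mem
      (Metric.ball_mem_nhds (0:ℂ) (hr₁.trans hr₁₂)) heq
  have heq' := hga.eqOn_of_preconnected_of_eventuallyEq hca
    (convex_ball _ _).isPreconnected h0 hev
  exact ⟨g z₀, habs, fun z hz => heq' hz⟩
end

section
/- Let m ∈ Hol(𝔻). The multiplication operator M_m(f) = m f on Hol(𝔻) is similar to a linear isometry of Hol(𝔻) if and only if m is a constant of modulus 1. -/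
open Metric Complex Set

/-- The multiplication operator `M_m : f ↦ m f` on `Hol(𝔻)`. -/
noncomputable def mulOp (m : ℂ → ℂ) (hm : DifferentiableOn ℂ m (Metric.ball 0 1)) :
    HolD →ₗ[ℂ] HolD where
  toFun f := ⟨fun z => m z * f.1 z, hm.mul f.2⟩
  map_add' _ _ := Subtype.ext (funext fun _ => mul_add _ _ _)
  map_smul' _ _ := Subtype.ext (funext fun _ => mul_left_comm _ _ _)

/- ### Auxiliary lemmas -/

lemma supNorm_nonneg (r : ℝ) (f : ℂ → ℂ) : 0 ≤ supNorm r f :=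
  Real.iSup_nonneg fun z => (norm_nonneg _)

lemma bddAbove_supNorm {r : ℝ} {f : ℂ → ℂ} (hf : ContinuousOn f (closedBall 0 r)) :
    BddAbove (Set.range fun z : closedBall (0:ℂ) r => ‖f z‖) := by
  have h := (isCompact_closedBall (0:ℂ) r).bddAbove_image
    (continuous_norm.comp_continuousOn hf)
  rwa [Set.image_eq_range] at h

lemma le_supNorm {r : ℝ} {f : ℂ → ℂ} (hf : ContinuousOn f (closedBall 0 r))
    {z : ℂ} (hz : z ∈ closedBall (0:ℂ) r) : ‖f z‖ ≤ supNorm r f :=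
  le_ciSup (bddAbove_supNorm hf) (⟨z, hz⟩ : closedBall (0:ℂ) r)

lemma supNorm_le {r : ℝ} {f : ℂ → ℂ} {B : ℝ} (hr : 0 ≤ r)
    (h : ∀ z ∈ closedBall (0:ℂ) r, ‖f z‖ ≤ B) : supNorm r f ≤ B := by
  have : Nonempty (closedBall (0:ℂ) r) := (nonempty_closedBall.2 hr).to_subtype
  exact ciSup_le fun z => h z z.2

lemma supNorm_const_one {r : ℝ} (hr : 0 ≤ r) : supNorm r (fun _ => (1:ℂ)) = 1 := by
  have : Nonempty (closedBall (0:ℂ) r) := (nonempty_closedBall.2 hr).to_subtype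
  simp [supNorm]

lemma holD_contOn {f : ℂ → ℂ} (hf : DifferentiableOn ℂ f (ball 0 1)) {r : ℝ} (hr : r < 1) :
    ContinuousOn f (closedBall 0 r) :=
  hf.continuousOn.mono (closedBall_subset_ball hr)

lemma mulOp_pow_apply (m : ℂ → ℂ) (hm : DifferentiableOn ℂ m (Metric.ball 0 1))
    (n : ℕ) (g : HolD) (z : ℂ) :
    (((mulOp m hm) ^ n) g).1 z = m z ^ n * g.1 z := by
  induction n with
  | zero => simp
  | succ n ih =>
    rw [pow_succ', Module.End.mul_apply]
    show m z * (((mulOp m hm) ^ n) g).1 z = m z ^ (n + 1) * g.1 z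
    rw [ih]; ring

lemma key_iter (m : ℂ → ℂ) (hm : DifferentiableOn ℂ m (Metric.ball 0 1))
    (U : HolD ≃ₗ[ℂ] HolD)
    (hiso : ∀ (f : HolD) (r : ℝ), 0 < r → r < 1 →
      supNorm r ((U.symm (mulOp m hm (U f))).1) = supNorm r f.1)
    (f : HolD) (r : ℝ) (hr : 0 < r) (hr1 : r < 1) (n : ℕ) :
    supNorm r ((U.symm (((mulOp m hm) ^ n) (U f))).1) = supNorm r f.1 := by
  induction n with
  | zero => simp
  | succ n ih =>
    have h1 : ((mulOp m hm) ^ (n+1)) (U f)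
        = mulOp m hm (U (U.symm (((mulOp m hm) ^ n) (U f)))) := by
      rw [U.apply_symm_apply, pow_succ', Module.End.mul_apply]
    rw [h1, hiso (U.symm (((mulOp m hm) ^ n) (U f))) r hr hr1]
    exact ih

/-- the multiplication operator `M_m` on `Hol(𝔻)` is similar to
a linear isometry of `Hol(𝔻)` (i.e. `U⁻¹ M_m U` preserves all seminorms for
some invertible continuous linear `U`) iff `m` is a constant of modulus 1. -/
theorem multiplication_similar_to_isometry_iff_unimodular_constant
    (m : ℂ → ℂ) (hm : DifferentiableOn ℂ m (Metric.ball 0 1)) :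
    (∃ U : HolD ≃ₗ[ℂ] HolD,
      (∀ r : ℝ, 0 < r → r < 1 → ∃ C s : ℝ, 0 < s ∧ s < 1 ∧ 0 ≤ C ∧
        ∀ f : HolD, supNorm r (U f).1 ≤ C * supNorm s f.1) ∧
      (∀ r : ℝ, 0 < r → r < 1 → ∃ C s : ℝ, 0 < s ∧ s < 1 ∧ 0 ≤ C ∧
        ∀ f : HolD, supNorm r (U.symm f).1 ≤ C * supNorm s f.1) ∧
      ∀ (f : HolD) (r : ℝ), 0 < r → r < 1 →
        supNorm r ((U.symm (mulOp m hm (U f))).1) = supNorm r f.1)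
    ↔ (∃ c : ℂ, ‖c‖ = 1 ∧ ∀ z ∈ Metric.ball (0:ℂ) 1, m z = c) := by
  constructor
  · rintro ⟨U, hU, hUs, hiso⟩
    have one_mem : (fun _ : ℂ => (1:ℂ)) ∈ HolD := differentiableOn_const 1
    set one : HolD := ⟨fun _ => (1:ℂ), one_mem⟩ with hone_def
    -- Step 1 : |m z| ≤ 1 on the ball
    have hle : ∀ z ∈ ball (0:ℂ) 1, ‖m z‖ ≤ 1 := by
      intro z₀ hz₀
      have habs : ‖z₀‖ < 1 := by
        simpa using mem_ball_zero_iff.1 hz₀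
      set r : ℝ := (‖z₀‖ + 1) / 2 with hr_def
      have hr0 : 0 < r := by
        have := norm_nonneg z₀; simp only [hr_def]; linarith
      have hr1 : r < 1 := by simp only [hr_def]; linarith
      have hz₀r : z₀ ∈ closedBall (0:ℂ) r := by
        rw [mem_closedBall_zero_iff, hr_def]; linarith
      obtain ⟨C, s, hs0, hs1, hC0, hCb⟩ := hU r hr0 hr1
      set f : HolD := U.symm one with hf_def
      have hbound : ∀ n : ℕ, ‖m z₀‖ ^ n ≤ C * supNorm s f.1 := by
        intro n
        have h1 : ‖m z₀‖ ^ n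
            ≤ supNorm r ((((mulOp m hm) ^ n) one).1) := by
          have := le_supNorm (holD_contOn (((mulOp m hm) ^ n) one).2 hr1) hz₀r
          rw [mulOp_pow_apply] at this
          simpa [map_mul, map_pow, hone_def] using this
        have h2 : supNorm r ((((mulOp m hm) ^ n) one).1)
            ≤ C * supNorm s ((U.symm (((mulOp m hm) ^ n) one)).1) := by
          have := hCb (U.symm (((mulOp m hm) ^ n) one))
          rwa [U.apply_symm_apply] at this
        have h3 : supNorm s ((U.symm (((mulOp m hm) ^ n) (U f))).1) = supNorm s f.1 :=
          key_iter m hm U hiso f s hs0 hs1 n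
        rw [hf_def, U.apply_symm_apply] at h3
        calc ‖m z₀‖ ^ n ≤ _ := h1
          _ ≤ _ := h2
          _ = C * supNorm s f.1 := by rw [h3]
      by_contra hcon
      push_neg at hcon
      obtain ⟨n, hn⟩ := pow_unbounded_of_one_lt (C * supNorm s f.1) hcon
      exact absurd (hbound n) (not_le.2 hn)
    -- Step 2 : no point of modulus < 1
    by_cases hex : ∃ z₁ ∈ ball (0:ℂ) 1, ‖m z₁‖ < 1
    · exfalso
      obtain ⟨z₁, hz₁, hz₁lt⟩ := hex
      obtain ⟨C, s, hs0, hs1, hC0, hCb⟩ := hUs (1/2) (by norm_num) (by norm_num)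
      obtain ⟨w, hw, hwmax⟩ := (isCompact_closedBall (0:ℂ) s).exists_isMaxOn
        (nonempty_closedBall.2 hs0.le)
        (continuous_norm.comp_continuousOn (holD_contOn hm hs1))
      set q : ℝ := ‖m w‖ with hq_def
      have hq0 : 0 ≤ q := norm_nonneg _
      have hq1 : q < 1 := by
        rcases lt_or_eq_of_le (hle w (closedBall_subset_ball hs1 hw)) with h | h
        · exact h
        · exfalso
          have hmax : IsMaxOn (norm ∘ m) (ball (0:ℂ) 1) w := by
            rw [isMaxOn_iff]
            intro z hz
            simp only [Function.comp_apply]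
            rw [h]
            exact hle z hz
          have heq := Complex.eqOn_of_isPreconnected_of_isMaxOn_norm
            (convex_ball (0:ℂ) 1).isPreconnected isOpen_ball hm
            (closedBall_subset_ball hs1 hw) hmax
          have hmw : m z₁ = m w := heq hz₁
          rw [hmw] at hz₁lt
          have hq1' : ‖m w‖ = 1 := by rw [← hq_def]; exact h
          linarith
      -- the contradiction
      set D : ℝ := supNorm s (U one).1 with hD_def
      have hD0 : 0 ≤ D := supNorm_nonneg _ _
      have hbd : ∀ n : ℕ, (1:ℝ) ≤ C * D * q ^ n := by
        intro n
        have h1 : supNorm (1/2) ((U.symm (((mulOp m hm) ^ n) (U one))).1)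
            = supNorm (1/2) one.1 :=
          key_iter m hm U hiso one (1/2) (by norm_num) (by norm_num) n
        have h2 : supNorm (1/2) one.1 = 1 := supNorm_const_one (by norm_num)
        have h3 : supNorm (1/2) ((U.symm (((mulOp m hm) ^ n) (U one))).1)
            ≤ C * supNorm s ((((mulOp m hm) ^ n) (U one)).1) :=
          hCb (((mulOp m hm) ^ n) (U one))
        have h4 : supNorm s ((((mulOp m hm) ^ n) (U one)).1) ≤ q ^ n * D := by
          apply supNorm_le hs0.le
          intro z hz
          rw [mulOp_pow_apply]
          rw [norm_mul, norm_pow]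
          have hmz : ‖m z‖ ≤ q := hwmax hz
          have hUz : ‖(U one).1 z‖ ≤ D :=
            le_supNorm (holD_contOn (U one).2 hs1) hz
          exact mul_le_mul (pow_le_pow_left₀ (norm_nonneg _) hmz n)
            hUz (norm_nonneg _) (pow_nonneg hq0 n)
        have : (1:ℝ) ≤ C * (q ^ n * D) := by
          rw [← h2, ← h1]
          exact h3.trans (mul_le_mul_of_nonneg_left h4 hC0)
        calc (1:ℝ) ≤ C * (q ^ n * D) := this
          _ = C * D * q ^ n := by ring
      rcases eq_or_lt_of_le (mul_nonneg hC0 hD0) with hCD | hCD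
      · have := hbd 0
        rw [← hCD] at this
        norm_num at this
      · obtain ⟨n, hn⟩ := exists_pow_lt_of_lt_one (inv_pos.2 hCD) hq1
        have := hbd n
        have h5 : C * D * q ^ n < C * D * (C * D)⁻¹ :=
          mul_lt_mul_of_pos_left hn hCD
        rw [mul_inv_cancel₀ hCD.ne'] at h5
        linarith
    · push_neg at hex
      have hone' : ∀ z ∈ ball (0:ℂ) 1, ‖m z‖ = 1 :=
        fun z hz => le_antisymm (hle z hz) (hex z hz)
      have h0mem : (0:ℂ) ∈ ball (0:ℂ) 1 := by simp
      have hmax : IsMaxOn (norm ∘ m) (ball (0:ℂ) 1) 0 := by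
        rw [isMaxOn_iff]
        intro z hz
        simp only [Function.comp_apply, hone' z hz, hone' 0 h0mem, le_refl]
      have heq := Complex.eqOn_of_isPreconnected_of_isMaxOn_norm
        (convex_ball (0:ℂ) 1).isPreconnected isOpen_ball hm h0mem hmax
      exact ⟨m 0, hone' 0 h0mem, fun z hz => heq hz⟩
  · rintro ⟨c, hc, hmc⟩
    refine ⟨LinearEquiv.refl ℂ HolD, ?_, ?_, ?_⟩
    · intro r hr0 hr1
      exact ⟨1, r, hr0, hr1, zero_le_one, fun f => by simp⟩
    · intro r hr0 hr1
      exact ⟨1, r, hr0, hr1, zero_le_one, fun f => by simp⟩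
    · intro f r hr0 hr1
      simp only [LinearEquiv.refl_apply, LinearEquiv.refl_symm]
      show supNorm r (fun z => m z * f.1 z) = supNorm r f.1
      unfold supNorm
      apply iSup_congr
      intro z
      have hz : (z : ℂ) ∈ ball (0:ℂ) 1 := closedBall_subset_ball hr1 z.2
      show ‖m (z:ℂ) * f.1 (z:ℂ)‖ = ‖f.1 (z:ℂ)‖
      rw [hmc z hz, norm_mul, hc, one_mul]
end
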